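/- For every integer n with 3 ≤ n ≤ 7, the subgroup Γ₀ of Γ = O⁺(ℤ^{n,1}) generated by the reflections s_{α₀}, s_{α₁}, …, s_{α_{n−1}} in the long simple roots α₀ = e₀ − e₁ − e₂ − e₃ and α_i = e_i − e_{i+1} for 1 ≤ i ≤ n−1 intersects the principal congruence subgroup Γ(2) trivially: Γ₀ ∩ Γ(2) = {1}. -/

import Mathlib

open scoped BigOperators

/-- The lattice `ℤ^{n,1}`: `ℤ^{n+1}` as an abelian group. -/
abbrev LVec (n : ℕ) : Type := Fin (n + 1) → ℤ

/-- The standard basis vectors `e₀, …, eₙ` of `ℤ^{n,1}`. -/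
def evec {n : ℕ} (i : Fin (n + 1)) : LVec n := Pi.single i 1

/-- The Lorentzian bilinear form `⟨x,y⟩ = -x₀y₀ + x₁y₁ + ⋯ + xₙyₙ` on `ℤ^{n,1}`. -/
def B {n : ℕ} (x y : LVec n) : ℤ :=
  ∑ i : Fin (n + 1), (if i = 0 then -1 else 1) * x i * y i

lemma B_comm {n : ℕ} (x y : LVec n) : B x y = B y x := by
  unfold B; exact Finset.sum_congr rfl fun i _ => by ring

lemma B_add_left {n : ℕ} (x y z : LVec n) : B (x + y) z = B x z + B y z := by
  unfold B
  rw [← Finset.sum_add_distrib]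
  exact Finset.sum_congr rfl fun i _ => by by_cases h : i = 0 <;> simp [h, Pi.add_apply] <;> ring

lemma B_smul_left {n : ℕ} (c : ℤ) (x z : LVec n) : B (c • x) z = c * B x z := by
  unfold B
  rw [Finset.mul_sum]
  exact Finset.sum_congr rfl fun i _ => by by_cases h : i = 0 <;> simp [h, Pi.smul_apply] <;> ring

lemma B_neg_left {n : ℕ} (x z : LVec n) : B (-x) z = -B x z := by
  have := B_smul_left (n := n) (-1) x z
  simpa using this

lemma B_sub_left {n : ℕ} (x y z : LVec n) : B (x - y) z = B x z - B y z := by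
  rw [sub_eq_add_neg, B_add_left, B_neg_left, sub_eq_add_neg]

lemma B_add_right {n : ℕ} (x y z : LVec n) : B x (y + z) = B x y + B x z := by
  rw [B_comm, B_add_left, B_comm y x, B_comm z x]

lemma B_smul_right {n : ℕ} (c : ℤ) (x z : LVec n) : B x (c • z) = c * B x z := by
  rw [B_comm, B_smul_left, B_comm]

lemma B_sub_right {n : ℕ} (x y z : LVec n) : B x (y - z) = B x y - B x z := by
  rw [B_comm, B_sub_left, B_comm y x, B_comm z x]

lemma B_eq {n : ℕ} (x y : LVec n) :
    B x y = -(x 0 * y 0) + ∑ i ∈ Finset.univ.erase 0, x i * y i := by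
  unfold B
  rw [← Finset.add_sum_erase _ _ (Finset.mem_univ (0 : Fin (n + 1)))]
  congr 1
  · simp
  · exact Finset.sum_congr rfl fun i hi => by
      rw [if_neg (Finset.ne_of_mem_erase hi), one_mul]

lemma B_evec_zero_right {n : ℕ} (x : LVec n) : B x (evec 0) = -(x 0) := by
  rw [B_eq]
  have h1 : ∑ i ∈ Finset.univ.erase (0 : Fin (n+1)), x i * evec 0 i = 0 := by
    apply Finset.sum_eq_zero
    intro i hi
    have : evec (0 : Fin (n+1)) i = 0 := Pi.single_eq_of_ne (Finset.ne_of_mem_erase hi) 1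
    rw [this, mul_zero]
  rw [h1]
  simp [evec, Pi.single_eq_same]

lemma B_evec_zero_self {n : ℕ} : B (evec (0 : Fin (n+1))) (evec 0) = -1 := by
  rw [B_evec_zero_right]
  simp [evec, Pi.single_eq_same]

/-- Cauchy-Schwarz consequence: two forward vectors of norm `-1` have negative inner product. -/
lemma B_neg_of_forward {n : ℕ} (x y : LVec n) (hx : B x x = -1) (hy : B y y = -1)
    (hx0 : 0 < x 0) (hy0 : 0 < y 0) : B x y < 0 := by
  have hx' := B_eq x x
  have hy' := B_eq y y
  have hxy := B_eq x y
  set Sx := ∑ i ∈ Finset.univ.erase (0 : Fin (n+1)), x i * x i with hSx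
  set Sy := ∑ i ∈ Finset.univ.erase (0 : Fin (n+1)), y i * y i with hSy
  set S := ∑ i ∈ Finset.univ.erase (0 : Fin (n+1)), x i * y i with hS
  have hCS : S ^ 2 ≤ Sx * Sy := by
    have := Finset.sum_mul_sq_le_sq_mul_sq (Finset.univ.erase (0 : Fin (n+1))) x y
    simpa [hSx, hSy, hS, sq] using this
  have hSx' : Sx = x 0 * x 0 - 1 := by linarith
  have hSy' : Sy = y 0 * y 0 - 1 := by linarith
  have hbound : S ^ 2 < (x 0 * y 0) ^ 2 := by
    rw [hSx', hSy'] at hCS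
    nlinarith
  have hpos : 0 < x 0 * y 0 := mul_pos hx0 hy0
  have : S < x 0 * y 0 := by nlinarith
  rw [hxy]
  linarith

lemma forward_ne_zero {n : ℕ} (y : LVec n) (hy : B y y = -1) : y 0 ≠ 0 := by
  have hy' := B_eq y y
  have hnn : 0 ≤ ∑ i ∈ Finset.univ.erase (0 : Fin (n+1)), y i * y i :=
    Finset.sum_nonneg fun i _ => mul_self_nonneg _
  intro h0
  rw [h0] at hy'
  linarith

lemma forward_of_B_neg {n : ℕ} (x y : LVec n) (hx : B x x = -1) (hy : B y y = -1)
    (hx0 : 0 < x 0) (hxy : B x y < 0) : 0 < y 0 := by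
  rcases lt_trichotomy (y 0) 0 with h | h | h
  · exfalso
    have hny : B (-y) (-y) = -1 := by
      rw [B_neg_left, B_comm, B_neg_left, B_comm]; simpa using hy
    have hny0 : 0 < (-y) 0 := by simpa using h
    have := B_neg_of_forward x (-y) hx hny hx0 hny0
    rw [B_comm, B_neg_left, B_comm] at this
    linarith
  · exact absurd h (forward_ne_zero y hy)
  · exact h

/-- The group `Γ = O⁺(ℤ^{n,1})` of integral linear automorphisms preserving the
Lorentzian form and the forward cone. -/
def Gamma (n : ℕ) : Subgroup ((LVec n) ≃ₗ[ℤ] (LVec n)) where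
  carrier := { g | (∀ x y, B (g x) (g y) = B x y) ∧ B (g (evec 0)) (evec 0) < 0 }
  one_mem' := by
    refine ⟨fun x y => rfl, ?_⟩
    show B (evec 0) (evec 0) < 0
    rw [B_evec_zero_self]
    norm_num
  mul_mem' := by
    rintro a b ⟨ha1, ha2⟩ ⟨hb1, hb2⟩
    have hmul : ∀ v : LVec n, (a * b) v = a (b v) := fun v => rfl
    refine ⟨fun x y => by rw [hmul, hmul, ha1, hb1], ?_⟩
    rw [hmul]
    set v := b (evec 0) with hv
    have hvnorm : B v v = -1 := by rw [hb1]; exact B_evec_zero_self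
    have hv0 : 0 < v 0 := by
      rw [B_evec_zero_right] at hb2; omega
    have hae0 : B (a (evec 0)) (a (evec 0)) = -1 := by rw [ha1]; exact B_evec_zero_self
    have hae00 : 0 < (a (evec 0)) 0 := by
      rw [B_evec_zero_right] at ha2; omega
    have havnorm : B (a v) (a v) = -1 := by rw [ha1]; exact hvnorm
    have hinner : B (a (evec 0)) (a v) < 0 := by
      rw [ha1, B_comm, B_evec_zero_right]; omega
    have := forward_of_B_neg (a (evec 0)) (a v) hae0 havnorm hae00 hinner
    rw [B_evec_zero_right]; omega
  inv_mem' := by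
    rintro a ⟨ha1, ha2⟩
    have hinv : ∀ v : LVec n, a (a⁻¹ v) = v := fun v => a.apply_symm_apply v
    have hform : ∀ x y, B (a⁻¹ x) (a⁻¹ y) = B x y := by
      intro x y
      have := ha1 (a⁻¹ x) (a⁻¹ y)
      rw [hinv, hinv] at this
      exact this.symm
    refine ⟨hform, ?_⟩
    set w := a⁻¹ (evec 0) with hw
    have hwnorm : B w w = -1 := by rw [hform]; exact B_evec_zero_self
    have hinner : B (evec 0) w < 0 := by
      have h1 : B (a (evec 0)) (a w) = B (evec 0) w := ha1 (evec 0) w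
      have h2 : a w = evec 0 := hinv (evec 0)
      rw [h2] at h1
      rw [← h1]
      exact ha2
    have he0 : B (evec (0 : Fin (n+1))) (evec 0) = -1 := B_evec_zero_self
    have he00 : 0 < (evec (0 : Fin (n+1))) 0 := by simp [evec, Pi.single_eq_same]
    have := forward_of_B_neg (evec 0) w he0 hwnorm he00 hinner
    rw [B_evec_zero_right]; omega

/-- The principal congruence subgroup `Γ(m)` of `Γ = O⁺(ℤ^{n,1})`:
elements congruent to the identity modulo `m`. -/
def GammaCong (n m : ℕ) : Subgroup (Gamma n) where
  carrier := { g | ∀ (v : LVec n) (i : Fin (n + 1)),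
      (m : ℤ) ∣ ((g : (LVec n) ≃ₗ[ℤ] (LVec n)) v i - v i) }
  one_mem' := by intro v i; simp
  mul_mem' := by
    intro a b ha hb v i
    have : ((a * b : Gamma n) : (LVec n) ≃ₗ[ℤ] (LVec n)) v
        = (a : (LVec n) ≃ₗ[ℤ] (LVec n)) ((b : (LVec n) ≃ₗ[ℤ] (LVec n)) v) := rfl
    rw [this]
    have h1 := ha ((b : (LVec n) ≃ₗ[ℤ] (LVec n)) v) i
    have h2 := hb v i
    have heq : (a : (LVec n) ≃ₗ[ℤ] (LVec n)) ((b : (LVec n) ≃ₗ[ℤ] (LVec n)) v) i - v i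
        = ((a : (LVec n) ≃ₗ[ℤ] (LVec n)) ((b : (LVec n) ≃ₗ[ℤ] (LVec n)) v) i
            - (b : (LVec n) ≃ₗ[ℤ] (LVec n)) v i)
          + ((b : (LVec n) ≃ₗ[ℤ] (LVec n)) v i - v i) := by ring
    rw [heq]
    exact dvd_add h1 h2
  inv_mem' := by
    intro a ha v i
    set w := ((a⁻¹ : Gamma n) : (LVec n) ≃ₗ[ℤ] (LVec n)) v with hw
    have hww : (a : (LVec n) ≃ₗ[ℤ] (LVec n)) w = v := by
      rw [hw]
      exact (a : (LVec n) ≃ₗ[ℤ] (LVec n)).apply_symm_apply v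
    have := ha w i
    rw [hww] at this
    exact (dvd_sub_comm).mp this

instance GammaCong_normal (n m : ℕ) : (GammaCong n m).Normal := by
  constructor
  intro g hg h v i
  set hE := (h : (LVec n) ≃ₗ[ℤ] (LVec n)) with hhE
  set gE := (g : (LVec n) ≃ₗ[ℤ] (LVec n)) with hgE
  have happ : ((h * g * h⁻¹ : Gamma n) : (LVec n) ≃ₗ[ℤ] (LVec n)) v
      = hE (gE (hE.symm v)) := rfl
  rw [happ]
  set w := hE.symm v with hwdef
  have hv : hE w = v := hE.apply_symm_apply v
  obtain ⟨u, hu⟩ : ∃ u : LVec n, gE w - w = (m : ℤ) • u := by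
    refine ⟨fun j => (gE w j - w j) / m, ?_⟩
    funext j
    have hj := hg w j
    simp only [Pi.sub_apply, Pi.smul_apply, smul_eq_mul]
    exact (Int.mul_ediv_cancel' hj).symm
  have key : hE (gE w) - v = (m : ℤ) • hE u := by
    rw [← hv, ← map_sub, hu, map_smul]
  have hcomp : hE (gE w) i - v i = (m : ℤ) * (hE u i) := by
    have := congrFun key i
    simpa using this
  rw [hcomp]
  exact dvd_mul_right _ _

/-- The reflection `s_α(v) = v - 2⟨v,α⟩α` in a norm one root `α`, as a linear map. -/
def reflMap {n : ℕ} (α : LVec n) : LVec n →ₗ[ℤ] LVec n where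
  toFun v := v - (2 * B v α) • α
  map_add' x y := by
    show (x + y) - (2 * B (x + y) α) • α
        = (x - (2 * B x α) • α) + (y - (2 * B y α) • α)
    rw [B_add_left, mul_add, add_smul]
    abel
  map_smul' c x := by
    show (c • x) - (2 * B (c • x) α) • α = c • (x - (2 * B x α) • α)
    rw [B_smul_left, smul_sub, smul_smul,
      show (2 : ℤ) * (c * B x α) = c * (2 * B x α) by ring]

lemma reflMap_apply {n : ℕ} (α : LVec n) (v : LVec n) :
    reflMap α v = v - (2 * B v α) • α := rfl

lemma reflMap_invol {n : ℕ} (α : LVec n) (hα : B α α = 1) (v : LVec n) :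
    reflMap α (reflMap α v) = v := by
  rw [reflMap_apply, reflMap_apply, B_sub_left, B_smul_left, hα, mul_one,
    show 2 * (B v α - 2 * B v α) = -(2 * B v α) by ring, neg_smul]
  abel

/-- The reflection in a norm one root, as a linear automorphism. -/
def srefl {n : ℕ} (α : LVec n) (hα : B α α = 1) : (LVec n) ≃ₗ[ℤ] (LVec n) :=
  LinearEquiv.ofLinear (reflMap α) (reflMap α)
    (LinearMap.ext fun v => reflMap_invol α hα v)
    (LinearMap.ext fun v => reflMap_invol α hα v)

lemma srefl_apply {n : ℕ} (α : LVec n) (hα : B α α = 1) (v : LVec n) :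
    srefl α hα v = v - (2 * B v α) • α := rfl

lemma srefl_form {n : ℕ} (α : LVec n) (hα : B α α = 1) (x y : LVec n) :
    B (srefl α hα x) (srefl α hα y) = B x y := by
  rw [srefl_apply, srefl_apply, B_sub_left, B_sub_right, B_sub_right,
    B_smul_left, B_smul_right, B_smul_right, B_smul_left, hα, B_comm y α]
  ring

lemma srefl_mem {n : ℕ} (α : LVec n) (hα : B α α = 1) : srefl α hα ∈ Gamma n := by
  refine ⟨srefl_form α hα, ?_⟩
  rw [srefl_apply, B_sub_left, B_smul_left, B_evec_zero_self, B_comm]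
  nlinarith [sq_nonneg (B α (evec (0 : Fin (n+1))))]

/-- The reflection in a norm one root, as an element of `Γ = O⁺(ℤ^{n,1})`. -/
def sG {n : ℕ} (α : LVec n) (hα : B α α = 1) : Gamma n := ⟨srefl α hα, srefl_mem α hα⟩

open Fin.NatCast in
/-- The long simple roots `α₀ = e₀ - e₁ - e₂ - e₃` and `αᵢ = eᵢ - eᵢ₊₁` for `1 ≤ i ≤ n-1`. -/
def longRoot (n : ℕ) (i : ℕ) : LVec n :=
  if i = 0 then evec 0 - evec 1 - evec 2 - evec 3
  else evec (i : Fin (n + 1)) - evec ((i + 1 : ℕ) : Fin (n + 1))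

/-- The subgroup `Γ₀` of `Γ = O⁺(ℤ^{n,1})` generated by the reflections
`s_{α₀}, …, s_{α_{n-1}}` in the long simple roots. -/
def Gamma0 (n : ℕ) : Subgroup (Gamma n) :=
  Subgroup.closure { g | ∃ i : ℕ, i < n ∧
    ∀ v : LVec n, (g : (LVec n) ≃ₗ[ℤ] (LVec n)) v = v - (B v (longRoot n i)) • longRoot n i }


/-! ### Auxiliary material for the main theorem -/

/-- The Weyl vector direction `k = -3e₀ + e₁ + ⋯ + eₙ`, orthogonal to all long roots. -/
def kvec (n : ℕ) : LVec n := fun j => if j = 0 then -3 else 1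

lemma kvec_zero {n : ℕ} : kvec n 0 = -3 := by simp [kvec]

lemma kvec_ne_zero {n : ℕ} {j : Fin (n+1)} (hj : j ≠ 0) : kvec n j = 1 := if_neg hj

lemma B_single_right {n : ℕ} (x : LVec n) (j : Fin (n+1)) :
    B x (evec j) = (if j = 0 then -1 else 1) * x j := by
  unfold B evec
  rw [Finset.sum_eq_single j]
  · simp [Pi.single_eq_same]
  · intro i _ hij
    rw [Pi.single_eq_of_ne hij, mul_zero]
  · intro h; exact absurd (Finset.mem_univ j) h

lemma B_single_left {n : ℕ} (x : LVec n) (j : Fin (n+1)) :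
    B (evec j) x = (if j = 0 then -1 else 1) * x j := by
  rw [B_comm, B_single_right]

lemma B_kvec_right {n : ℕ} (x : LVec n) :
    B x (kvec n) = 3 * x 0 + ∑ j ∈ Finset.univ.erase 0, x j := by
  rw [B_eq]
  rw [kvec_zero]
  rw [Finset.sum_congr rfl (fun j hj => by
    rw [kvec_ne_zero (Finset.ne_of_mem_erase hj), mul_one])]
  ring

open Fin.NatCast in
lemma fin_coe_ne_zero {n : ℕ} {m : ℕ} (h0 : 0 < m) (h : m < n + 1) :
    ((m : Fin (n+1)) : Fin (n+1)) ≠ 0 := by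
  intro hc
  have h1 : ((m : Fin (n+1)) : ℕ) = m := Fin.val_cast_of_lt h
  rw [hc] at h1
  simp at h1
  omega

open Fin.NatCast in
lemma kvec_coe_nat {n : ℕ} {m : ℕ} (h0 : 0 < m) (h : m < n + 1) :
    kvec n ((m : ℕ) : Fin (n+1)) = 1 :=
  kvec_ne_zero (fin_coe_ne_zero h0 h)

open Fin.NatCast in
/-- `k` is orthogonal to every long simple root. -/
lemma B_kvec_longRoot {n : ℕ} (hn : 3 ≤ n) (i : ℕ) (hi : i < n) :
    B (kvec n) (longRoot n i) = 0 := by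
  unfold longRoot
  by_cases h : i = 0
  · rw [if_pos h]
    rw [B_sub_right, B_sub_right, B_sub_right, B_single_right, B_single_right,
      B_single_right, B_single_right]
    have e1 : (1 : Fin (n+1)) = ((1 : ℕ) : Fin (n+1)) := by norm_cast
    have e2 : (2 : Fin (n+1)) = ((2 : ℕ) : Fin (n+1)) := by norm_cast
    have e3 : (3 : Fin (n+1)) = ((3 : ℕ) : Fin (n+1)) := by norm_cast
    rw [if_pos rfl, e1, e2, e3,
      if_neg (fin_coe_ne_zero (by omega) (by omega)),
      if_neg (fin_coe_ne_zero (by omega) (by omega)),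
      if_neg (fin_coe_ne_zero (by omega) (by omega)),
      kvec_zero, kvec_coe_nat (by omega) (by omega),
      kvec_coe_nat (by omega) (by omega), kvec_coe_nat (by omega) (by omega)]
    ring
  · rw [if_neg h]
    rw [B_sub_right, B_single_right, B_single_right,
      if_neg (fin_coe_ne_zero (by omega) (by omega)),
      if_neg (fin_coe_ne_zero (by omega) (by omega)),
      kvec_coe_nat (by omega) (by omega), kvec_coe_nat (by omega) (by omega)]
    ring

/-- Every element of `Γ₀` fixes `k`. -/
lemma gamma0_fixes_kvec {n : ℕ} (hn : 3 ≤ n) (g : Gamma n) (hg : g ∈ Gamma0 n) :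
    (g : (LVec n) ≃ₗ[ℤ] (LVec n)) (kvec n) = kvec n := by
  unfold Gamma0 at hg
  induction hg using Subgroup.closure_induction with
  | mem x hx =>
      obtain ⟨i, hi, hx⟩ := hx
      rw [hx (kvec n), B_kvec_longRoot hn i hi, zero_smul, sub_zero]
  | one => rfl
  | mul x y hx hy ihx ihy =>
      have : ((x * y : Gamma n) : (LVec n) ≃ₗ[ℤ] (LVec n)) (kvec n)
          = (x : (LVec n) ≃ₗ[ℤ] (LVec n)) ((y : (LVec n) ≃ₗ[ℤ] (LVec n)) (kvec n)) := rfl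
      rw [this, ihy, ihx]
  | inv x hx ihx =>
      have h1 : (x : (LVec n) ≃ₗ[ℤ] (LVec n))
          (((x⁻¹ : Gamma n) : (LVec n) ≃ₗ[ℤ] (LVec n)) (kvec n)) = kvec n :=
        (x : (LVec n) ≃ₗ[ℤ] (LVec n)).apply_symm_apply (kvec n)
      have h2 := congrArg (x : (LVec n) ≃ₗ[ℤ] (LVec n)).symm h1
      rw [LinearEquiv.symm_apply_apply] at h2
      rw [h2]
      have h3 := congrArg (x : (LVec n) ≃ₗ[ℤ] (LVec n)).symm ihx
      rw [LinearEquiv.symm_apply_apply] at h3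
      exact h3.symm

lemma int_abs_le_sq (x : ℤ) : |x| ≤ x ^ 2 := by
  rcases eq_or_ne x 0 with h | h
  · simp [h]
  · have h1 : 1 ≤ |x| := Int.one_le_abs (by omega)
    nlinarith [sq_abs x, abs_nonneg x]

/-- The key arithmetic lemma: a vector `w` with `⟨w,k⟩ = 0` and `⟨eᵢ,w⟩ + ⟨w,w⟩ = 0`
must vanish, when `3 ≤ n ≤ 7` and `i ≠ 0`. -/
lemma key_lemma {n : ℕ} (hn : 3 ≤ n) (hn' : n ≤ 7) (w : LVec n) (i : Fin (n+1))
    (hi : i ≠ 0) (hA : B w (kvec n) = 0) (hB : B (evec i) w + B w w = 0) : w = 0 := by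
  set a := w 0 with ha
  set t := w i with ht
  have hiE : i ∈ Finset.univ.erase (0 : Fin (n+1)) :=
    Finset.mem_erase.mpr ⟨hi, Finset.mem_univ i⟩
  set E' := (Finset.univ.erase (0 : Fin (n+1))).erase i with hE'
  have hsplit : ∀ f : Fin (n+1) → ℤ,
      ∑ j ∈ Finset.univ.erase (0 : Fin (n+1)), f j = f i + ∑ j ∈ E', f j := by
    intro f
    rw [hE', Finset.add_sum_erase _ _ hiE]
  set S1 := ∑ j ∈ E', w j with hS1
  set S2 := ∑ j ∈ E', w j * w j with hS2
  -- rewrite the hypotheses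
  have hAe : 3 * a + (t + S1) = 0 := by
    rw [B_kvec_right, hsplit] at hA
    exact hA
  have hBw : B (evec i) w = t := by
    rw [B_single_left, if_neg hi, one_mul]
  have hBww : B w w = -(a * a) + (t * t + S2) := by
    rw [B_eq, hsplit]
  have hBe : t + (-(a * a) + (t * t + S2)) = 0 := by
    rw [hBw, hBww] at hB
    exact hB
  -- Cauchy-Schwarz bound
  have hcard : (E'.card : ℤ) ≤ 6 := by
    have h2 : E'.card = n - 1 := by
      rw [hE', Finset.card_erase_of_mem hiE,
        Finset.card_erase_of_mem (Finset.mem_univ _), Finset.card_univ, Fintype.card_fin]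
      omega
    have h3 : E'.card ≤ 6 := by omega
    exact_mod_cast h3
  have hCS : S1 ^ 2 ≤ 6 * S2 := by
    have h1 := Finset.sum_mul_sq_le_sq_mul_sq E' w (fun _ => 1)
    have h2 : ∑ j ∈ E', w j * 1 = S1 := by simp [hS1]
    have h3 : ∑ j ∈ E', (fun _ => (1:ℤ)) j ^ 2 = (E'.card : ℤ) := by simp
    have h4 : ∑ j ∈ E', w j ^ 2 = S2 := by
      rw [hS2]; exact Finset.sum_congr rfl fun j _ => sq (w j)
    rw [h2, h3, h4] at h1
    have hS2nn : 0 ≤ S2 := by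
      rw [hS2]; exact Finset.sum_nonneg fun j _ => mul_self_nonneg _
    nlinarith
  have hABS : |S1| ≤ S2 := by
    calc |S1| ≤ ∑ j ∈ E', |w j| := Finset.abs_sum_le_sum_abs _ _
    _ ≤ ∑ j ∈ E', w j * w j := Finset.sum_le_sum fun j _ => by
        have := int_abs_le_sq (w j)
        nlinarith [this]
    _ = S2 := rfl
  -- now pure integer arithmetic: a = 0, t = 0, S2 = 0
  clear_value a t S1 S2
  have hS1v : S1 = -3 * a - t := by linarith
  have hS2v : S2 = a * a - t - t * t := by linarith
  have habs : -S2 ≤ S1 ∧ S1 ≤ S2 := abs_le.mp hABS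
  have h1 : (-3 * a - t) ^ 2 ≤ 6 * (a * a - t - t * t) := by
    rw [← hS1v, ← hS2v]; exact hCS
  clear hCS hABS hAe hBe hBw hBww hsplit hA hB hiE
  have h2 : 2 * t * t + 3 * t ≤ 0 := by nlinarith [sq_nonneg (a + t)]
  have h3 : -2 ≤ t := by nlinarith [sq_nonneg (t + 1)]
  have h4 : t ≤ 0 := by nlinarith [sq_nonneg t]
  have hne2 : t ≠ -2 := by
    intro h
    rw [h] at h2
    norm_num at h2
  have htcases : t = 0 ∨ t = -1 := by omega
  have hat : a = 0 ∧ t = 0 := by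
    rcases htcases with ht0 | ht1
    · refine ⟨?_, ht0⟩
      rw [ht0] at h1
      have h5 : a * a ≤ 0 := by nlinarith
      have h6 : a * a = 0 := le_antisymm h5 (mul_self_nonneg a)
      exact mul_self_eq_zero.mp h6
    · exfalso
      rw [ht1] at h1
      have h5 : 0 ≤ (a - 1) * (a - 1) := mul_self_nonneg _
      have h6 : 3 * ((a - 1) * (a - 1)) ≤ 2 := by nlinarith
      have h7 : (a - 1) * (a - 1) = 0 := by
        have h8 : (a - 1) * (a - 1) < 0 + 1 := by linarith
        have h9 : (a - 1) * (a - 1) ≤ 0 := Int.lt_add_one_iff.mp h8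
        exact le_antisymm h9 h5
      have ha1 : a = 1 := by
        have := mul_self_eq_zero.mp h7
        linarith
      have hb1 := habs.1
      have hb2 := habs.2
      rw [hS1v, hS2v, ht1, ha1] at hb1 hb2
      linarith
  obtain ⟨ha0, ht0⟩ := hat
  have hS2z : S2 = 0 := by rw [hS2v, ha0, ht0]; ring
  have hS2z' : ∑ j ∈ E', w j * w j = 0 := by rw [← hS2]; exact hS2z
  have hwj : ∀ j ∈ E', w j = 0 := by
    intro j hj
    have h1 : ∀ j ∈ E', 0 ≤ w j * w j := fun j _ => mul_self_nonneg _
    have h2 := (Finset.sum_eq_zero_iff_of_nonneg h1).mp hS2z' j hj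
    exact mul_self_eq_zero.mp h2
  funext j
  show w j = 0
  rcases eq_or_ne j 0 with h | h
  · rw [h, ← ha]; exact ha0
  · rcases eq_or_ne j i with h' | h'
    · rw [h', ← ht]; exact ht0
    · exact hwj j (Finset.mem_erase.mpr ⟨h', Finset.mem_erase.mpr ⟨h, Finset.mem_univ j⟩⟩)


/-- For `3 ≤ n ≤ 7` the finite Coxeter group `Γ₀` generated by the reflections in the
long simple roots meets the principal congruence subgroup `Γ(2)` trivially. -/
theorem gamma0_inf_gammaCong_two_eq_bot (n : ℕ) (hn : 3 ≤ n) (hn' : n ≤ 7) :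
    Gamma0 n ⊓ GammaCong n 2 = ⊥ := by
  rw [eq_bot_iff]
  intro g hg
  rw [Subgroup.mem_inf] at hg
  obtain ⟨hg0, hg2⟩ := hg
  rw [Subgroup.mem_bot]
  set gE := (g : (LVec n) ≃ₗ[ℤ] (LVec n)) with hgEdef
  have hmem : (∀ x y, B (gE x) (gE y) = B x y) ∧ B (gE (evec 0)) (evec 0) < 0 := g.2
  have hB : ∀ x y, B (gE x) (gE y) = B x y := hmem.1
  have hcong : ∀ (v : LVec n) (i : Fin (n+1)), (2:ℤ) ∣ (gE v i - v i) := hg2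
  have hk : gE (kvec n) = kvec n := gamma0_fixes_kvec hn g hg0
  -- For every `i ≠ 0`, `g` fixes `eᵢ`.
  have hfix : ∀ i : Fin (n+1), i ≠ 0 → gE (evec i) = evec i := by
    intro i hi
    obtain ⟨w, hw⟩ : ∃ w : LVec n, gE (evec i) = evec i + (2:ℤ) • w := by
      refine ⟨fun j => (gE (evec i) j - evec i j) / 2, ?_⟩
      funext j
      have h1 := Int.mul_ediv_cancel' (hcong (evec i) j)
      simp only [Pi.add_apply, Pi.smul_apply, smul_eq_mul]
      linarith
    have heii : B (evec i) (evec i) = 1 := by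
      rw [B_single_right, if_neg hi, one_mul]
      simp [evec, Pi.single_eq_same]
    -- condition (B)
    have hcondB : B (evec i) w + B w w = 0 := by
      have h1 : B (gE (evec i)) (gE (evec i)) = 1 := by rw [hB]; exact heii
      rw [hw, B_add_left, B_add_right, B_add_right, B_smul_left, B_smul_right,
        B_smul_left, B_smul_right, heii, B_comm w (evec i)] at h1
      linarith
    -- condition (A)
    have hcondA : B w (kvec n) = 0 := by
      have h1 : B (gE (evec i)) (kvec n) = B (evec i) (kvec n) := by
        conv_lhs => rw [← hk]
        exact hB (evec i) (kvec n)
      rw [hw, B_add_left, B_smul_left] at h1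
      linarith
    have hw0 : w = 0 := key_lemma hn hn' w i hi hcondA hcondB
    rw [hw, hw0, smul_zero, add_zero]
  -- `g` fixes `e₀`.
  have hfix0 : gE (evec 0) = evec 0 := by
    set u := gE (evec 0) with hu
    have huj : ∀ j : Fin (n+1), j ≠ 0 → u j = 0 := by
      intro j hj
      have h1 : B u (evec j) = 0 := by
        conv_lhs => rw [hu, ← hfix j hj]
        rw [hB, B_single_right, if_neg hj, one_mul]
        exact Pi.single_eq_of_ne hj 1
      rw [B_single_right, if_neg hj, one_mul] at h1
      exact h1
    have hu0 : u 0 = 1 := by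
      have h1 : B u (kvec n) = B (evec 0) (kvec n) := by
        conv_lhs => rw [hu, ← hk]
        exact hB (evec 0) (kvec n)
      rw [B_kvec_right, B_kvec_right] at h1
      have h2 : ∑ j ∈ Finset.univ.erase (0 : Fin (n+1)), u j = 0 :=
        Finset.sum_eq_zero fun j hj => huj j (Finset.ne_of_mem_erase hj)
      have h3 : ∑ j ∈ Finset.univ.erase (0 : Fin (n+1)), evec (0 : Fin (n+1)) j = 0 :=
        Finset.sum_eq_zero fun j hj =>
          Pi.single_eq_of_ne (Finset.ne_of_mem_erase hj) 1
      rw [h2, h3] at h1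
      have h4 : evec (0 : Fin (n+1)) 0 = 1 := Pi.single_eq_same 0 1
      rw [h4] at h1
      linarith
    funext j
    rcases eq_or_ne j 0 with h | h
    · rw [h, hu0]
      exact (show evec (0 : Fin (n+1)) 0 = 1 from Pi.single_eq_same 0 1).symm
    · rw [huj j h]
      exact (show evec (0 : Fin (n+1)) j = 0 from Pi.single_eq_of_ne h 1).symm
  -- conclude g = 1
  have hgeq : gE = 1 := by
    have h1 : gE.toLinearMap = (1 : (LVec n) ≃ₗ[ℤ] (LVec n)).toLinearMap := by
      apply (Pi.basisFun ℤ (Fin (n+1))).ext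
      intro j
      rw [Pi.basisFun_apply]
      show gE (Pi.single j 1) = (1 : (LVec n) ≃ₗ[ℤ] (LVec n)) (Pi.single j 1)
      have h2 : (Pi.single j 1 : LVec n) = evec j := rfl
      rw [h2]
      rcases eq_or_ne j 0 with h | h
      · rw [h, hfix0]; rfl
      · rw [hfix j h]; rfl
    exact LinearEquiv.toLinearMap_injective h1
  exact Subtype.ext hgeq
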